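/- Let G be a residually finite group and A a finite alphabet with |A| ≥ 2. Then Aut(A^G) is residually finite. Conversely, if Aut(A^G) is residually finite, so is G. -/

import Mathlib

/-- The (left) shift action on configurations: `(shift g x) h = x (g⁻¹ * h)`. -/
def shift {G A : Type*} [Group G] (g : G) (x : G → A) : G → A := fun h => x (g⁻¹ * h)

/-- A subshift: a closed, shift-invariant subset of the full shift `A^G`. -/
def IsSubshift {G A : Type*} [Group G] [TopologicalSpace A] (X : Set (G → A)) : Prop :=
  IsClosed X ∧ ∀ g : G, ∀ x ∈ X, shift g x ∈ X

/-- `X` is strongly irreducible with constant `K`: whenever `S * K ∩ T = ∅`, any two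
patterns of `X` with supports `S` and `T` can be jointly realized in `X`. -/
def StronglyIrreducible {G A : Type*} [Group G] (X : Set (G → A)) (K : Finset G) : Prop :=
  ∀ S T : Finset G, (∀ s ∈ S, ∀ k ∈ K, s * k ∉ T) →
    ∀ x ∈ X, ∀ y ∈ X, ∃ z ∈ X, (∀ g ∈ S, z g = x g) ∧ (∀ g ∈ T, z g = y g)

/-- The shift action on a shift-invariant subset, as a map `X → X`. -/
def shiftX {G A : Type*} [Group G] (X : Set (G → A))
    (hX : ∀ g : G, ∀ x ∈ X, shift g x ∈ X) (g : G) (x : X) : X :=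
  ⟨shift g (x : G → A), hX g x x.2⟩

/-- The automorphism group of a subshift `X`: shift-commuting self-homeomorphisms of `X`,
as a subgroup of the permutation group of `X`. -/
def Aut {G A : Type*} [Group G] [TopologicalSpace A] (X : Set (G → A))
    (hX : ∀ g : G, ∀ x ∈ X, shift g x ∈ X) : Subgroup (Equiv.Perm X) where
  carrier := {φ | Continuous φ ∧ Continuous φ.symm ∧
    ∀ (g : G) (x : X), φ (shiftX X hX g x) = shiftX X hX g (φ x)}
  one_mem' := by
    refine ⟨?_, ?_, fun g x => rfl⟩
    · simpa using continuous_id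
    · exact continuous_id
  mul_mem' := by
    rintro a b ⟨ha1, ha2, ha3⟩ ⟨hb1, hb2, hb3⟩
    refine ⟨?_, ?_, fun g x => ?_⟩
    · have : ⇑(a * b) = ⇑a ∘ ⇑b := rfl
      rw [this]; exact ha1.comp hb1
    · have : ⇑(a * b).symm = ⇑b.symm ∘ ⇑a.symm := rfl
      rw [this]; exact hb2.comp ha2
    · have h1 : (a * b) (shiftX X hX g x) = a (b (shiftX X hX g x)) := rfl
      have h2 : (a * b) x = a (b x) := rfl
      rw [h1, h2, hb3, ha3]
  inv_mem' := by
    rintro a ⟨h1, h2, h3⟩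
    refine ⟨?_, ?_, fun g x => ?_⟩
    · have : ⇑(a⁻¹) = ⇑a.symm := rfl
      rw [this]; exact h2
    · have : ⇑(a⁻¹).symm = ⇑a := rfl
      rw [this]; exact h1
    · apply a.injective
      rw [show a (a⁻¹ (shiftX X hX g x)) = shiftX X hX g x from a.apply_symm_apply _, h3,
        show a (a⁻¹ x) = x from a.apply_symm_apply _]

/-- A group is residually finite if every non-identity element avoids some normal
subgroup of finite index. -/
def ResiduallyFinite (M : Type*) [Group M] : Prop :=
  ∀ m : M, m ≠ 1 → ∃ N : Subgroup M, N.Normal ∧ N.FiniteIndex ∧ m ∉ N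


section Work

variable {G A : Type*} [Group G]

/-- cylinder basis for nhds in product of discrete spaces -/
lemma cylinder_nhds {A : Type*} [TopologicalSpace A] [DiscreteTopology A] {x : G → A}
    {s : Set (G → A)} (hs : s ∈ nhds x) :
    ∃ I : Finset G, ∀ y : G → A, (∀ i ∈ I, y i = x i) → y ∈ s := by
  rw [nhds_pi, Filter.mem_pi] at hs
  obtain ⟨I, hIfin, t, ht, hsub⟩ := hs
  refine ⟨hIfin.toFinset, fun y hy => hsub fun i hi => ?_⟩
  rw [hy i (hIfin.mem_toFinset.mpr hi)]
  have := ht i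
  rw [nhds_discrete] at this
  exact this

/-- The set of configurations fixed by all of `N`. -/
def FixS (A : Type*) (N : Subgroup G) : Set ↥(Set.univ : Set (G → A)) :=
  {y | ∀ n ∈ N, shift n (y : G → A) = y}

lemma fixS_finite [Fintype A] (N : Subgroup G) (hN : N.FiniteIndex) :
    (FixS A N).Finite := by
  haveI := hN
  have hinj : Function.Injective
      (fun (y : ↥(FixS A N)) (q : G ⧸ N) =>
        Quotient.liftOn' q (fun g => (y.1 : G → A) g⁻¹) (by
          intro a b hab
          have hab' : a⁻¹ * b ∈ N := QuotientGroup.leftRel_apply.mp hab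
          have := congrFun (y.2 (a⁻¹ * b) hab' ) a⁻¹
          simp only [shift] at this
          have h2 : (a⁻¹ * b)⁻¹ * a⁻¹ = b⁻¹ := by group
          rw [h2] at this
          exact this.symm)) := by
    intro y z hyz
    ext h
    have := congrFun hyz (QuotientGroup.mk h⁻¹)
    simpa using this
  have : Finite ↥(FixS A N) := Finite.of_injective _ hinj
  exact Set.toFinite _


section TopA
variable [Fintype A] [TopologicalSpace A] [DiscreteTopology A]

def hU (G A : Type*) [Group G] : ∀ g : G, ∀ x ∈ (Set.univ : Set (G → A)), shift g x ∈ Set.univ :=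
  fun _ _ _ => Set.mem_univ _

lemma fixS_invariant (N : Subgroup G) {φ : Equiv.Perm ↥(Set.univ : Set (G → A))}
    (hφ : φ ∈ Aut (Set.univ : Set (G → A)) (hU G A)) {y} (hy : y ∈ FixS A N) : φ y ∈ FixS A N := by
  intro n hn
  have h1 : shiftX (Set.univ : Set (G → A)) (hU G A) n y = y := Subtype.ext (hy n hn)
  have h2 := hφ.2.2 n y
  rw [h1] at h2
  exact congrArg Subtype.val h2.symm

/-- restriction of an automorphism to the finite set `FixS A N`, as a permutation -/
def restrictPerm (N : Subgroup G) (φ : ↥(Aut (Set.univ : Set (G → A)) (hU G A))) :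
    Equiv.Perm ↥(FixS A N) where
  toFun y := ⟨φ.1 y.1, fixS_invariant N φ.2 y.2⟩
  invFun y := ⟨φ.1.symm y.1, by
    have : (φ.1.symm : Equiv.Perm ↥(Set.univ : Set (G → A))) = (φ⁻¹ : ↥(Aut (Set.univ : Set (G → A)) (hU G A))).1 := rfl
    rw [this]
    exact fixS_invariant N (φ⁻¹).2 y.2⟩
  left_inv y := by apply Subtype.ext; simp
  right_inv y := by apply Subtype.ext; simp

/-- restriction as a group homomorphism -/
def restrictHom (N : Subgroup G) :
    ↥(Aut (Set.univ : Set (G → A)) (hU G A)) →* Equiv.Perm ↥(FixS A N) where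
  toFun := restrictPerm N
  map_one' := by ext y; rfl
  map_mul' a b := by ext y; rfl


theorem aut_residuallyFinite [Nontrivial A] (hG : ResiduallyFinite G) :
    ResiduallyFinite ↥(Aut (Set.univ : Set (G → A)) (hU G A)) := by
  classical
  intro m hm
  have hx : ∃ x : ↥(Set.univ : Set (G → A)), m.1 x ≠ x := by
    by_contra h
    push_neg at h
    exact hm (Subtype.ext (Equiv.ext h))
  obtain ⟨x, hxne⟩ := hx
  have hg0 : ∃ g₀ : G, (m.1 x).1 g₀ ≠ x.1 g₀ := by
    by_contra h
    push_neg at h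
    exact hxne (Subtype.ext (funext h))
  obtain ⟨g₀, hg₀⟩ := hg0
  have hcontF : Continuous (fun y : ↥(Set.univ : Set (G → A)) => (m.1 y).1 g₀) :=
    (continuous_apply g₀).comp (continuous_subtype_val.comp m.2.1)
  have hUopen : IsOpen ((fun y : ↥(Set.univ : Set (G → A)) => (m.1 y).1 g₀) ⁻¹'
      {(m.1 x).1 g₀}) := hcontF.isOpen_preimage _ (isOpen_discrete _)
  have hnhds : ((fun y : ↥(Set.univ : Set (G → A)) => (m.1 y).1 g₀) ⁻¹'
      {(m.1 x).1 g₀}) ∈ nhds x := hUopen.mem_nhds rfl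
  rw [mem_nhds_subtype] at hnhds
  obtain ⟨t, ht, hts⟩ := hnhds
  obtain ⟨I, hI⟩ := cylinder_nhds ht
  set F' : Finset G := insert g₀ I with hF'
  have sep : ∀ p : G × G, p.1 ≠ p.2 →
      ∃ Np : Subgroup G, Np.Normal ∧ Np.FiniteIndex ∧ p.1 * p.2⁻¹ ∉ Np := by
    intro p hp
    exact hG _ (by simpa [mul_inv_eq_one] using hp)
  set Npick : G × G → Subgroup G := fun p => if h : p.1 ≠ p.2 then (sep p h).choose else ⊤
    with hNpick
  set N : Subgroup G := ⨅ p ∈ (F' ×ˢ F' : Finset (G × G)), Npick p with hN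
  have hNfi : N.FiniteIndex := by
    refine Subgroup.finiteIndex_iInf' _ (fun p hp => ?_)
    by_cases h : p.1 ≠ p.2
    · rw [hNpick]; simp only [dif_pos h]; exact (sep p h).choose_spec.2.1
    · rw [hNpick]; simp only [dif_neg h]; infer_instance
  have hsepN : ∀ f ∈ F', ∀ f' ∈ F', f * f'⁻¹ ∈ N → f = f' := by
    intro f hf f' hf' hmem
    by_contra hne
    have hle : N ≤ Npick (f, f') := by
      rw [hN]
      exact iInf₂_le (f, f') (Finset.mem_product.mpr ⟨hf, hf'⟩)
    have hin := hle hmem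
    have hne' : (f, f').1 ≠ (f, f').2 := hne
    rw [hNpick] at hin
    simp only [dif_pos hne'] at hin
    exact (sep (f, f') hne').choose_spec.2.2 hin
  set y : G → A := fun h => if hc : ∃ f ∈ F', h * f⁻¹ ∈ N then x.1 hc.choose else x.1 g₀
    with hy
  have hyval : ∀ h : G, ∀ f ∈ F', h * f⁻¹ ∈ N → y h = x.1 f := by
    intro h f hf hmem
    have hc : ∃ f ∈ F', h * f⁻¹ ∈ N := ⟨f, hf, hmem⟩
    rw [hy]
    simp only [dif_pos hc]
    obtain ⟨hcF, hcmem⟩ := hc.choose_spec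
    have hch : hc.choose = f := by
      refine hsepN _ hcF _ hf ?_
      have heq : hc.choose * f⁻¹ = (h * hc.choose⁻¹)⁻¹ * (h * f⁻¹) := by group
      rw [heq]; exact N.mul_mem (N.inv_mem hcmem) hmem
    rw [hch]
  have hyF : ∀ f ∈ F', y f = x.1 f := fun f hf => hyval f f hf (by simpa using N.one_mem)
  have hyFix : ∀ n ∈ N, shift n y = y := by
    intro n hn
    funext h
    show y (n⁻¹ * h) = y h
    by_cases hc : ∃ f ∈ F', h * f⁻¹ ∈ N
    · obtain ⟨f, hf, hmem⟩ := hc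
      have h1 : (n⁻¹ * h) * f⁻¹ ∈ N := by
        have heq : (n⁻¹ * h) * f⁻¹ = n⁻¹ * (h * f⁻¹) := by group
        rw [heq]; exact N.mul_mem (N.inv_mem hn) hmem
      rw [hyval _ f hf h1, hyval h f hf hmem]
    · have hc' : ¬ ∃ f ∈ F', (n⁻¹ * h) * f⁻¹ ∈ N := by
        rintro ⟨f, hf, hmem⟩
        refine hc ⟨f, hf, ?_⟩
        have heq : h * f⁻¹ = n * ((n⁻¹ * h) * f⁻¹) := by group
        rw [heq]; exact N.mul_mem hn hmem
      rw [hy]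
      simp only [dif_neg hc, dif_neg hc']
  have hYmem : (⟨y, Set.mem_univ y⟩ : ↥(Set.univ : Set (G → A))) ∈ FixS A N := hyFix
  set Y : ↥(FixS A N) := ⟨⟨y, Set.mem_univ y⟩, hYmem⟩ with hY
  haveI : Finite ↥(FixS A N) := (fixS_finite N hNfi).to_subtype
  refine ⟨(restrictHom N).ker, inferInstance, Subgroup.finiteIndex_ker _, ?_⟩
  intro hker
  rw [MonoidHom.mem_ker] at hker
  have hfix : restrictHom N m Y = Y := by rw [hker]; rfl
  have hmy : m.1 Y.1 = Y.1 := congrArg Subtype.val hfix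
  have hyI : ∀ i ∈ I, y i = x.1 i := fun i hi => hyF i (Finset.mem_insert_of_mem hi)
  have h1 : (m.1 ⟨y, Set.mem_univ y⟩).1 g₀ = (m.1 x).1 g₀ :=
    hts (by exact hI y hyI)
  have h2 : (m.1 ⟨y, Set.mem_univ y⟩).1 g₀ = y g₀ := by
    rw [show (⟨y, Set.mem_univ y⟩ : ↥(Set.univ : Set (G → A))) = Y.1 from rfl, hmy]
  have h3 : y g₀ = x.1 g₀ := hyF g₀ (Finset.mem_insert_self _ _)
  exact hg₀ (by rw [← h1, h2, h3])

/-- The right-shift permutation of the full shift. -/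
def rperm (A : Type*) (g : G) : Equiv.Perm ↥(Set.univ : Set (G → A)) where
  toFun x := ⟨fun h => x.1 (h * g), Set.mem_univ _⟩
  invFun x := ⟨fun h => x.1 (h * g⁻¹), Set.mem_univ _⟩
  left_inv x := Subtype.ext (funext fun h => by simp)
  right_inv x := Subtype.ext (funext fun h => by simp)

lemma rperm_mem [Fintype A] (g : G) : rperm A g ∈ Aut (Set.univ : Set (G → A)) (hU G A) := by
  refine ⟨?_, ?_, ?_⟩
  · show Continuous fun x : ↥(Set.univ : Set (G → A)) =>
      (⟨fun h => x.1 (h * g), Set.mem_univ _⟩ : ↥(Set.univ : Set (G → A)))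
    refine Continuous.subtype_mk (continuous_pi fun h => ?_) _
    show Continuous fun x : ↥(Set.univ : Set (G → A)) => (x : G → A) (h * g)
    exact (continuous_apply (h * g)).comp continuous_subtype_val
  · show Continuous fun x : ↥(Set.univ : Set (G → A)) =>
      (⟨fun h => x.1 (h * g⁻¹), Set.mem_univ _⟩ : ↥(Set.univ : Set (G → A)))
    refine Continuous.subtype_mk (continuous_pi fun h => ?_) _
    show Continuous fun x : ↥(Set.univ : Set (G → A)) => (x : G → A) (h * g⁻¹)
    exact (continuous_apply (h * g⁻¹)).comp continuous_subtype_val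
  · intro g' x
    refine Subtype.ext (funext fun h => ?_)
    show (shift g' x.1) (h * g) = (shift g' (fun h' => x.1 (h' * g))) h
    simp only [shift]
    rw [mul_assoc]

/-- Embedding of `G` into the automorphism group via right shifts. -/
def rhom (A : Type*) [Fintype A] [TopologicalSpace A] [DiscreteTopology A] :
    G →* ↥(Aut (Set.univ : Set (G → A)) (hU G A)) where
  toFun g := ⟨rperm A g, rperm_mem g⟩
  map_one' := Subtype.ext (Equiv.ext fun x => Subtype.ext (funext fun h => by
    show x.1 (h * 1) = x.1 h
    rw [mul_one]))
  map_mul' g₁ g₂ := Subtype.ext (Equiv.ext fun x => Subtype.ext (funext fun h => by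
    show x.1 (h * (g₁ * g₂)) = x.1 (h * g₁ * g₂)
    rw [mul_assoc]))

theorem resid_of_aut_resid [Nontrivial A]
    (hM : ResiduallyFinite ↥(Aut (Set.univ : Set (G → A)) (hU G A))) :
    ResiduallyFinite G := by
  classical
  intro g hg
  have hne : rhom A g ≠ 1 := by
    intro heq
    obtain ⟨a, b, hab⟩ := exists_pair_ne A
    set x : G → A := fun h => if h = 1 then a else b with hx
    have h1 : (rperm A g) ⟨x, Set.mem_univ x⟩ = ⟨x, Set.mem_univ x⟩ := by
      have h0 : (rhom A g).1 = (1 : ↥(Aut (Set.univ : Set (G → A)) (hU G A))).1 := by rw [heq]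
      exact DFunLike.congr_fun h0 _
    have h2 : x (1 * g) = x 1 := congrFun (congrArg Subtype.val h1) 1
    rw [one_mul] at h2
    have hxg : x g = b := if_neg hg
    have hx1 : x 1 = a := if_pos rfl
    rw [hxg, hx1] at h2
    exact hab h2.symm
  obtain ⟨N', hN'norm, hN'fi, hgN'⟩ := hM (rhom A g) hne
  refine ⟨N'.comap (rhom A), Subgroup.Normal.comap hN'norm _, ?_, ?_⟩
  · haveI := hN'fi
    constructor
    rw [Subgroup.index_comap]
    exact Subgroup.FiniteIndex.index_ne_zero
  · intro hmem
    exact hgN' hmem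

end TopA
end Work

/-- for `|A| ≥ 2`, the automorphism group of the full shift `A^G` is
residually finite if and only if `G` is residually finite. -/
theorem stmt9 {G A : Type*} [Group G] [Fintype A] [TopologicalSpace A] [DiscreteTopology A]
    [Nontrivial A] :
    ResiduallyFinite G ↔
      ResiduallyFinite (Aut (Set.univ : Set (G → A)) (fun _ _ _ => Set.mem_univ _)) := by
  constructor
  · intro hG
    exact aut_residuallyFinite hG
  · intro hM
    exact resid_of_aut_resid hM
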